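/- Soundness of the Hilbert calculus H_S4 with respect to the restricted Nmatrix R(M'_S4): for every set Γ of modal formulas and every modal formula φ, if Γ ⊢_S4 φ then for every level valuation v ∈ L'_S4, v(φ) ∈ D = {1,2} whenever v(γ) ∈ D for every γ ∈ Γ. -/

import Mathlib

/-- Modal formulas over signature Σ = {¬, □, →, ∨, ∧}. -/
inductive MF
  | var : ℕ → MF
  | neg : MF → MF
  | box : MF → MF
  | imp : MF → MF → MF
  | dis : MF → MF → MF
  | con : MF → MF → MF
deriving DecidableEq

/-- The three truth values 0, 1, 2. -/
inductive V3
  | z | o | t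
deriving DecidableEq

/-- Designated values D = {1, 2}. -/
def Des : Set V3 := {V3.o, V3.t}

def negOp : V3 → Set V3
  | .z => {.o, .t}
  | .o => {.z}
  | .t => {.z}

def boxOp : V3 → Set V3
  | .z => {.z}
  | .o => {.z}
  | .t => {.t}

def impOp : V3 → V3 → Set V3
  | .z, .z => {.o, .t}
  | .z, .o => {.o, .t}
  | .z, .t => {.t}
  | .o, .z => {.z}
  | .o, .o => {.o, .t}
  | .o, .t => {.t}
  | .t, .z => {.z}
  | .t, .o => {.o}
  | .t, .t => {.t}

def disOp : V3 → V3 → Set V3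
  | .z, .z => {.z}
  | .z, .o => {.o, .t}
  | .o, .z => {.o, .t}
  | .o, .o => {.o, .t}
  | _, _ => {.t}

def conOp : V3 → V3 → Set V3
  | .z, _ => {.z}
  | _, .z => {.z}
  | .t, .t => {.t}
  | _, _ => {.o}

/-- Valuations over the reduced Nmatrix M'_S4. -/
def IsVal (v : MF → V3) : Prop :=
  (∀ α, v (.neg α) ∈ negOp (v α)) ∧
  (∀ α, v (.box α) ∈ boxOp (v α)) ∧
  (∀ α β, v (.imp α β) ∈ impOp (v α) (v β)) ∧
  (∀ α β, v (.dis α β) ∈ disOp (v α) (v β)) ∧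
  (∀ α β, v (.con α β) ∈ conOp (v α) (v β))

/-- The levels L_k. -/
def LevelS4 : ℕ → Set (MF → V3)
  | 0 => {v | IsVal v}
  | (k+1) => {v ∈ LevelS4 k | ∀ α, (∀ w ∈ LevelS4 k, w α ∈ Des) → v α = V3.t}

/-- Level valuations L'_S4 = ⋂_{k ≥ 0} L_k. -/
def LVS4 : Set (MF → V3) := ⋂ k, LevelS4 k

/-- Theorems of the Hilbert calculus H_S4 : classical propositional axioms over
{¬,→,∨,∧}, plus K, T, 4, with modus ponens and necessitation. -/
inductive S4Thm : MF → Prop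
  | ax1 (α β : MF) : S4Thm (α.imp (β.imp α))
  | ax2 (α β γ : MF) : S4Thm ((α.imp (β.imp γ)).imp ((α.imp β).imp (α.imp γ)))
  | ax3 (α β : MF) : S4Thm (α.imp (β.imp (α.con β)))
  | ax4 (α β : MF) : S4Thm ((α.con β).imp α)
  | ax5 (α β : MF) : S4Thm ((α.con β).imp β)
  | ax6 (α β : MF) : S4Thm (α.imp (α.dis β))
  | ax7 (α β : MF) : S4Thm (β.imp (α.dis β))
  | ax8 (α β γ : MF) : S4Thm ((α.imp γ).imp ((β.imp γ).imp ((α.dis β).imp γ)))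
  | ax9 (α β : MF) : S4Thm ((β.imp α).imp ((β.imp α.neg).imp β.neg))
  | ax10 (α β : MF) : S4Thm (α.imp (α.neg.imp β))
  | dne (α : MF) : S4Thm (α.neg.neg.imp α)
  | axK (α β : MF) : S4Thm ((α.imp β).box.imp (α.box.imp β.box))
  | axT (α : MF) : S4Thm (α.box.imp α)
  | axFour (α : MF) : S4Thm (α.box.imp α.box.box)
  | mp {α β : MF} : S4Thm (α.imp β) → S4Thm α → S4Thm β
  | nec {α : MF} : S4Thm α → S4Thm α.box

/-- Γ ⊢_S4 φ : either φ is a theorem, or some β₁,…,βₙ ∈ Γ (n ≥ 1) give a theorem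
β₁ → (β₂ → (… → (βₙ → φ)…)). -/
def S4Deriv (Γ : Set MF) (φ : MF) : Prop :=
  S4Thm φ ∨ ∃ l : List MF, l ≠ [] ∧ (∀ β ∈ l, β ∈ Γ) ∧ S4Thm (l.foldr MF.imp φ)

/-- Δ is φ-saturated (w.r.t. ⊢_S4). -/
def SatS4 (Δ : Set MF) (φ : MF) : Prop :=
  ¬ S4Deriv Δ φ ∧ ∀ α ∉ Δ, S4Deriv (insert α Δ) φ

open Classical in
/-- The canonical function v_Δ. -/
noncomputable def vDeltaS4 (Δ : Set MF) : MF → V3 :=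
  fun α => if MF.box α ∈ Δ then V3.t else if α ∈ Δ then V3.o else V3.z

/-- Λ is closed under (immediate, hence all) subformulas. -/
def SubClosed (Λ : Set MF) : Prop :=
  (∀ α, MF.neg α ∈ Λ → α ∈ Λ) ∧
  (∀ α, MF.box α ∈ Λ → α ∈ Λ) ∧
  (∀ α β, MF.imp α β ∈ Λ → α ∈ Λ ∧ β ∈ Λ) ∧
  (∀ α β, MF.dis α β ∈ Λ → α ∈ Λ ∧ β ∈ Λ) ∧
  (∀ α β, MF.con α β ∈ Λ → α ∈ Λ ∧ β ∈ Λ)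

/-- Partial valuations with domain Λ (modelled as total functions constrained on Λ). -/
def IsPVal (Λ : Set MF) (v : MF → V3) : Prop :=
  (∀ α, MF.neg α ∈ Λ → v (.neg α) ∈ negOp (v α)) ∧
  (∀ α, MF.box α ∈ Λ → v (.box α) ∈ boxOp (v α)) ∧
  (∀ α β, MF.imp α β ∈ Λ → v (.imp α β) ∈ impOp (v α) (v β)) ∧
  (∀ α β, MF.dis α β ∈ Λ → v (.dis α β) ∈ disOp (v α) (v β)) ∧
  (∀ α β, MF.con α β ∈ Λ → v (.con α β) ∈ conOp (v α) (v β))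

/-- PLV'(Λ): partial' level valuations over Λ (witnesses amongst level valuations). -/
def PLV' (Λ : Set MF) : Set (MF → V3) :=
  {v | IsPVal Λ v ∧ ∀ α ∈ Λ, v α = V3.o →
    ∃ w ∈ LVS4, w α = V3.z ∧ ∀ β ∈ Λ, v β = V3.t → w β = V3.t}

/-- PLV(Λ): partial level valuations over Λ, defined as the largest subset of
PV(Λ) whose condition is witnessed inside itself. -/
def PLV (Λ : Set MF) : Set (MF → V3) :=
  ⋃₀ {S | (∀ v ∈ S, IsPVal Λ v) ∧
      ∀ v ∈ S, ∀ α ∈ Λ, v α = V3.o →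
        ∃ w ∈ S, w α = V3.z ∧ ∀ β ∈ Λ, v β = V3.t → w β = V3.t}

/-- Set of subformulas of a modal formula. -/
def MF.subf : MF → Finset MF
  | .var n => {.var n}
  | .neg α => insert (.neg α) α.subf
  | .box α => insert (.box α) α.subf
  | .imp α β => insert (.imp α β) (α.subf ∪ β.subf)
  | .dis α β => insert (.dis α β) (α.subf ∪ β.subf)
  | .con α β => insert (.con α β) (α.subf ∪ β.subf)

section Aux

lemma mem_Des_iff (x : V3) : x ∈ Des ↔ x ≠ V3.z := by
  cases x <;> simp [Des]

lemma imp_mem {a b c : V3} (h : c ∈ impOp a b) :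
    c ∈ Des ↔ (a ∈ Des → b ∈ Des) := by
  cases a <;> cases b <;> cases c <;> simp_all [impOp, Des]

lemma neg_mem {a c : V3} (h : c ∈ negOp a) :
    c ∈ Des ↔ ¬ a ∈ Des := by
  cases a <;> cases c <;> simp_all [negOp, Des]

lemma con_mem {a b c : V3} (h : c ∈ conOp a b) :
    c ∈ Des ↔ (a ∈ Des ∧ b ∈ Des) := by
  cases a <;> cases b <;> cases c <;> simp_all [conOp, Des]

lemma dis_mem {a b c : V3} (h : c ∈ disOp a b) :
    c ∈ Des ↔ (a ∈ Des ∨ b ∈ Des) := by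
  cases a <;> cases b <;> cases c <;> simp_all [disOp, Des]

lemma box_mem {a c : V3} (h : c ∈ boxOp a) :
    c ∈ Des ↔ a = V3.t := by
  cases a <;> cases c <;> simp_all [boxOp, Des]

lemma imp_tt {b : V3} (h : V3.t ∈ impOp V3.t b) : b = V3.t := by
  cases b <;> simp_all [impOp]

lemma isVal_of_mem {k : ℕ} {v : MF → V3} (h : v ∈ LevelS4 k) : IsVal v := by
  induction k with
  | zero => exact h
  | succ k ih => exact ih h.1

lemma thm_des {α : MF} (h : S4Thm α) :
    ∃ n, ∀ k, n ≤ k → ∀ v ∈ LevelS4 k, v α ∈ Des := by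
  induction h with
  | ax1 α β =>
      refine ⟨0, fun k _ v hv => ?_⟩
      have hV := isVal_of_mem hv
      rw [imp_mem (hV.2.2.1 α (β.imp α)), imp_mem (hV.2.2.1 β α)]
      simp only [Des, Set.mem_insert_iff, Set.mem_singleton_iff]
      tauto
  | ax2 α β γ =>
      refine ⟨0, fun k _ v hv => ?_⟩
      have hV := isVal_of_mem hv
      rw [imp_mem (hV.2.2.1 (α.imp (β.imp γ)) ((α.imp β).imp (α.imp γ))),
        imp_mem (hV.2.2.1 α (β.imp γ)), imp_mem (hV.2.2.1 β γ),
        imp_mem (hV.2.2.1 (α.imp β) (α.imp γ)),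
        imp_mem (hV.2.2.1 α β), imp_mem (hV.2.2.1 α γ)]
      simp only [Des, Set.mem_insert_iff, Set.mem_singleton_iff]
      tauto
  | ax3 α β =>
      refine ⟨0, fun k _ v hv => ?_⟩
      have hV := isVal_of_mem hv
      rw [imp_mem (hV.2.2.1 α (β.imp (α.con β))), imp_mem (hV.2.2.1 β (α.con β)),
        con_mem (hV.2.2.2.2 α β)]
      simp only [Des, Set.mem_insert_iff, Set.mem_singleton_iff]
      tauto
  | ax4 α β =>
      refine ⟨0, fun k _ v hv => ?_⟩
      have hV := isVal_of_mem hv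
      rw [imp_mem (hV.2.2.1 (α.con β) α), con_mem (hV.2.2.2.2 α β)]
      simp only [Des, Set.mem_insert_iff, Set.mem_singleton_iff]
      tauto
  | ax5 α β =>
      refine ⟨0, fun k _ v hv => ?_⟩
      have hV := isVal_of_mem hv
      rw [imp_mem (hV.2.2.1 (α.con β) β), con_mem (hV.2.2.2.2 α β)]
      simp only [Des, Set.mem_insert_iff, Set.mem_singleton_iff]
      tauto
  | ax6 α β =>
      refine ⟨0, fun k _ v hv => ?_⟩
      have hV := isVal_of_mem hv
      rw [imp_mem (hV.2.2.1 α (α.dis β)), dis_mem (hV.2.2.2.1 α β)]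
      simp only [Des, Set.mem_insert_iff, Set.mem_singleton_iff]
      tauto
  | ax7 α β =>
      refine ⟨0, fun k _ v hv => ?_⟩
      have hV := isVal_of_mem hv
      rw [imp_mem (hV.2.2.1 β (α.dis β)), dis_mem (hV.2.2.2.1 α β)]
      simp only [Des, Set.mem_insert_iff, Set.mem_singleton_iff]
      tauto
  | ax8 α β γ =>
      refine ⟨0, fun k _ v hv => ?_⟩
      have hV := isVal_of_mem hv
      rw [imp_mem (hV.2.2.1 (α.imp γ) ((β.imp γ).imp ((α.dis β).imp γ))),
        imp_mem (hV.2.2.1 (β.imp γ) ((α.dis β).imp γ)),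
        imp_mem (hV.2.2.1 (α.dis β) γ), imp_mem (hV.2.2.1 α γ),
        imp_mem (hV.2.2.1 β γ), dis_mem (hV.2.2.2.1 α β)]
      simp only [Des, Set.mem_insert_iff, Set.mem_singleton_iff]
      tauto
  | ax9 α β =>
      refine ⟨0, fun k _ v hv => ?_⟩
      have hV := isVal_of_mem hv
      rw [imp_mem (hV.2.2.1 (β.imp α) ((β.imp α.neg).imp β.neg)),
        imp_mem (hV.2.2.1 (β.imp α.neg) β.neg),
        imp_mem (hV.2.2.1 β α), imp_mem (hV.2.2.1 β α.neg),
        neg_mem (hV.1 α), neg_mem (hV.1 β)]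
      simp only [Des, Set.mem_insert_iff, Set.mem_singleton_iff]
      tauto
  | ax10 α β =>
      refine ⟨0, fun k _ v hv => ?_⟩
      have hV := isVal_of_mem hv
      rw [imp_mem (hV.2.2.1 α (α.neg.imp β)), imp_mem (hV.2.2.1 α.neg β),
        neg_mem (hV.1 α)]
      simp only [Des, Set.mem_insert_iff, Set.mem_singleton_iff]
      tauto
  | dne α =>
      refine ⟨0, fun k _ v hv => ?_⟩
      have hV := isVal_of_mem hv
      rw [imp_mem (hV.2.2.1 α.neg.neg α), neg_mem (hV.1 α.neg), neg_mem (hV.1 α)]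
      simp only [Des, Set.mem_insert_iff, Set.mem_singleton_iff]
      tauto
  | axK α β =>
      refine ⟨0, fun k _ v hv => ?_⟩
      have hV := isVal_of_mem hv
      have h4 := hV.2.2.1 α β
      rw [imp_mem (hV.2.2.1 (α.imp β).box (α.box.imp β.box)),
        imp_mem (hV.2.2.1 α.box β.box),
        box_mem (hV.2.1 (α.imp β)), box_mem (hV.2.1 α), box_mem (hV.2.1 β)]
      intro e1 e2
      rw [e1, e2] at h4
      exact imp_tt h4
  | axT α =>
      refine ⟨0, fun k _ v hv => ?_⟩
      have hV := isVal_of_mem hv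
      rw [imp_mem (hV.2.2.1 α.box α), box_mem (hV.2.1 α)]
      intro e
      rw [mem_Des_iff, e]
      simp
  | axFour α =>
      refine ⟨0, fun k _ v hv => ?_⟩
      have hV := isVal_of_mem hv
      have hb := hV.2.1 α.box
      rw [imp_mem (hV.2.2.1 α.box α.box.box), box_mem (hV.2.1 α),
        box_mem hb]
      intro e
      have hb2 := hV.2.1 α
      rw [e] at hb2
      simpa [boxOp] using hb2
  | @mp α β h1 h2 ih1 ih2 =>
      obtain ⟨n1, hn1⟩ := ih1
      obtain ⟨n2, hn2⟩ := ih2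
      refine ⟨max n1 n2, fun k hk v hv => ?_⟩
      have ha := hn1 k (le_trans (le_max_left _ _) hk) v hv
      have hb := hn2 k (le_trans (le_max_right _ _) hk) v hv
      have hV := isVal_of_mem hv
      rw [imp_mem (hV.2.2.1 α β)] at ha
      exact ha hb
  | @nec α h ih =>
      obtain ⟨n, hn⟩ := ih
      refine ⟨n + 1, fun k hk v hv => ?_⟩
      cases k with
      | zero => omega
      | succ m =>
          have hm : n ≤ m := Nat.succ_le_succ_iff.mp hk
          have ht : v α = V3.t :=
            hv.2 α (fun w hw => hn m hm w hw)
          have hb := (isVal_of_mem hv).2.1 α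
          rw [ht] at hb
          have : v α.box = V3.t := by simpa [boxOp] using hb
          rw [this, mem_Des_iff]
          simp

lemma thm_des_lvs4 {α : MF} (h : S4Thm α) {v : MF → V3} (hv : v ∈ LVS4) :
    v α ∈ Des := by
  obtain ⟨n, hn⟩ := thm_des h
  exact hn n le_rfl v (Set.mem_iInter.mp hv n)

lemma fold_mp {v : MF → V3} (hV : IsVal v) (φ : MF) :
    ∀ l : List MF, v (l.foldr MF.imp φ) ∈ Des → (∀ β ∈ l, v β ∈ Des) → v φ ∈ Des := by
  intro l
  induction l with
  | nil => exact fun h _ => h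
  | cons β l ih =>
      intro hfold hmem
      simp only [List.foldr] at hfold
      rw [imp_mem (hV.2.2.1 β (l.foldr MF.imp φ))] at hfold
      exact ih (hfold (hmem β List.mem_cons_self))
        (fun γ hγ => hmem γ (List.mem_cons_of_mem _ hγ))

end Aux

/-- Soundness of H_S4 w.r.t. R(M'_S4). -/
theorem s4_soundness (Γ : Set MF) (φ : MF) (h : S4Deriv Γ φ) :
    ∀ v ∈ LVS4, (∀ γ ∈ Γ, v γ ∈ Des) → v φ ∈ Des := by
  intro v hv hΓ
  have hV : IsVal v := isVal_of_mem (Set.mem_iInter.mp hv 0)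
  rcases h with hthm | ⟨l, _, hmem, hthm⟩
  · exact thm_des_lvs4 hthm hv
  · exact fold_mp hV φ l (thm_des_lvs4 hthm hv) (fun β hβ => hΓ β (hmem β hβ))
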